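/- arXiv:2406.05104 — 3 statements merged into one kernel-verified Lean document; each statement's English description precedes it below -/
import Mathlib

section
/- Let S = {ν_m}_{m≥1} ⊂ (0,∞) be an increasing sequence whose counting function satisfies N_S(r) ≤ C̃ r^q for all r > 0, for constants C̃ > 0 and q > 0. Then there exists a constant Ĉ > 0, depending only on C̃ and q, such that Σ_{m : ν_m > γ} e^{−σ ν_m} ≤ Ĉ · (1 + (σγ)^q)/σ^q · e^{−σγ} for every σ > 0 and every γ > 0. -/
open MeasureTheory Set Filter
open scoped ENNReal

noncomputable section

private lemma aux_rpow_add_le (a b q : ℝ) (ha : 0 ≤ a) (hb : 0 ≤ b) (hq : 0 < q) :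
    (a + b) ^ q ≤ 2 ^ q * (a ^ q + b ^ q) := by
  have h1 : a + b ≤ 2 * max a b := by
    rcases le_total a b with h | h <;> [rw [max_eq_right h]; rw [max_eq_left h]] <;> nlinarith
  calc (a+b)^q ≤ (2 * max a b)^q := Real.rpow_le_rpow (by positivity) h1 hq.le
    _ = 2^q * (max a b)^q := Real.mul_rpow (by norm_num) (le_max_iff.2 (Or.inl ha))
    _ ≤ 2^q * (a^q + b^q) := by
        gcongr
        rcases le_total a b with h | h
        · rw [max_eq_right h]; nlinarith [Real.rpow_nonneg ha q]
        · rw [max_eq_left h]; nlinarith [Real.rpow_nonneg hb q]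

private lemma aux_summable_exp : Summable (fun k : ℕ => Real.exp (-(k:ℝ))) := by
  have h : ∀ k : ℕ, Real.exp (-(k:ℝ)) = (Real.exp (-1)) ^ k := by
    intro k; rw [← Real.exp_nat_mul]; ring_nf
  simpa [h] using summable_geometric_of_lt_one (Real.exp_pos _).le
    (Real.exp_lt_one_iff.2 (by norm_num))

private lemma aux_summable_rpow_exp (q : ℝ) :
    Summable (fun k : ℕ => ((k:ℝ)+1)^q * Real.exp (-(k:ℝ))) := by
  set r : ℝ := Real.exp (-1) with hr
  have hrpos : 0 < r := Real.exp_pos _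
  have hrlt : ‖r‖ < 1 := by
    rw [Real.norm_eq_abs, abs_of_pos hrpos]
    exact Real.exp_lt_one_iff.2 (by norm_num)
  set n : ℕ := ⌈q⌉₊
  have h1 : Summable (fun k : ℕ => (k:ℝ)^n * r^k) :=
    summable_pow_mul_geometric_of_norm_lt_one n hrlt
  have h2 : Summable (fun k : ℕ => ((k+1:ℕ):ℝ)^n * r^(k+1)) :=
    h1.comp_injective Nat.succ_injective
  have h3 := h2.mul_left r⁻¹
  refine Summable.of_nonneg_of_le (fun k => by positivity) (fun k => ?_) h3
  have he : ∀ k : ℕ, Real.exp (-(k:ℝ)) = r ^ k := by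
    intro k; rw [hr, ← Real.exp_nat_mul]; ring_nf
  have hle : ((k:ℝ)+1)^q ≤ ((k:ℝ)+1)^(n:ℝ) :=
    Real.rpow_le_rpow_of_exponent_le (by nlinarith [Nat.cast_nonneg (α:=ℝ) k]) (Nat.le_ceil q)
  have hnn : ((k:ℝ)+1)^(n:ℝ) = ((k+1:ℕ):ℝ)^n := by
    rw [Real.rpow_natCast]; push_cast; ring
  calc ((k:ℝ)+1)^q * Real.exp (-(k:ℝ)) ≤ ((k+1:ℕ):ℝ)^n * r^k := by
        rw [he]; exact mul_le_mul_of_nonneg_right (hnn ▸ hle) (by positivity)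
    _ = r⁻¹ * (((k+1:ℕ):ℝ)^n * r^(k+1)) := by
        field_simp; ring

/-- Lemma `l1` of the paper: tail estimate for Dirichlet-type series
of a sequence with polynomially bounded counting function. -/
theorem statement7 (Ctil q : ℝ) (hC : 0 < Ctil) (hq : 0 < q) :
    ∃ Chat : ℝ, 0 < Chat ∧
      ∀ ν : ℕ → ℝ, (∀ m, 0 < ν m) → StrictMono ν →
        (∀ r : ℝ, 0 < r → (({m : ℕ | ν m ≤ r}.ncard : ℝ)) ≤ Ctil * r ^ q) →
        ∀ σ γ : ℝ, 0 < σ → 0 < γ →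
          Summable (fun m : {m : ℕ // γ < ν m} => Real.exp (-(σ * ν m.1))) ∧
          (∑' m : {m : ℕ // γ < ν m}, Real.exp (-(σ * ν m.1)))
            ≤ Chat * ((1 + (σ * γ) ^ q) / σ ^ q) * Real.exp (-(σ * γ)) := by
  classical
  set D : ℝ := ∑' k : ℕ, ((k:ℝ)+1)^q * Real.exp (-(k:ℝ)) with hDdef
  set E : ℝ := ∑' k : ℕ, Real.exp (-(k:ℝ)) with hEdef
  have hD0 : 0 ≤ D := tsum_nonneg (fun k => by positivity)
  have hE0 : 0 ≤ E := tsum_nonneg (fun k => by positivity)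
  have h2q : (0:ℝ) < 2 ^ q := Real.rpow_pos_of_pos (by norm_num) q
  refine ⟨Ctil * 2 ^ q * (D + E) + 1, by positivity, ?_⟩
  intro ν hν hmono hcnt σ γ hσ hγ
  -- lower bound on ν and finiteness of sublevel sets
  have hkey : ∀ m : ℕ, ((m:ℝ) + 1) ≤ Ctil * (ν m) ^ q := by
    intro m
    have hset : {k : ℕ | ν k ≤ ν m} = Set.Iic m := by
      ext k; simp [hmono.le_iff_le]
    have h := hcnt (ν m) (hν m)
    rw [hset] at h
    have hc : (Set.Iic m).ncard = m + 1 := by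
      rw [← Finset.coe_Iic, Set.ncard_coe_finset, Nat.card_Iic]
    rw [hc] at h
    push_cast at h
    linarith
  have hfin : ∀ r : ℝ, 0 < r → {m : ℕ | ν m ≤ r}.Finite := by
    intro r hr
    refine Set.Finite.subset (Set.finite_Iic ⌈Ctil * r ^ q⌉₊) ?_
    intro m hm
    simp only [Set.mem_setOf_eq] at hm
    have h1 : Ctil * (ν m) ^ q ≤ Ctil * r ^ q :=
      mul_le_mul_of_nonneg_left (Real.rpow_le_rpow (hν m).le hm hq.le) hC.le
    have h2 : (m:ℝ) ≤ ⌈Ctil * r ^ q⌉₊ := by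
      have := Nat.le_ceil (Ctil * r ^ q); linarith [hkey m]
    exact Set.mem_Iic.mpr (Nat.cast_le.mp h2)
  -- the ENNReal-valued series and fiber decomposition
  set T := {m : ℕ // γ < ν m} with hT
  set f : T → ℝ≥0∞ := fun m => ENNReal.ofReal (Real.exp (-(σ * ν m.1))) with hf
  set g : T → ℕ := fun m => ⌊σ * (ν m.1 - γ)⌋₊ with hg
  have hsig : ∑' m : T, f m = ∑' k : ℕ, ∑' m : (g⁻¹' {k} : Set T), f m := by
    rw [← Equiv.tsum_eq (Equiv.sigmaFiberEquiv g) f, ENNReal.tsum_sigma']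
    rfl
  -- per-fiber bound
  have hfib : ∀ k : ℕ,
      ∑' m : (g⁻¹' {k} : Set T), f m ≤
        ENNReal.ofReal (Ctil * (γ + ((k:ℝ)+1)/σ) ^ q)
          * ENNReal.ofReal (Real.exp (-(σ*γ)) * Real.exp (-(k:ℝ))) := by
    intro k
    set r : ℝ := γ + ((k:ℝ)+1)/σ with hrdef
    have hrpos : 0 < r := by positivity
    set c : ℝ≥0∞ := ENNReal.ofReal (Real.exp (-(σ*γ)) * Real.exp (-(k:ℝ))) with hc
    have hterm : ∀ m : (g⁻¹' {k} : Set T), f m ≤ c := by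
      rintro ⟨m, hm⟩
      have hmk : (⌊σ * (ν m.1 - γ)⌋₊ : ℕ) = k := hm
      have hpos : 0 ≤ σ * (ν m.1 - γ) := by nlinarith [m.2]
      have hfl : (k:ℝ) ≤ σ * (ν m.1 - γ) := by
        rw [← hmk]; exact Nat.floor_le hpos
      have : Real.exp (-(σ * ν m.1)) ≤ Real.exp (-(σ*γ)) * Real.exp (-(k:ℝ)) := by
        rw [← Real.exp_add]
        exact Real.exp_le_exp.2 (by nlinarith)
      exact ENNReal.ofReal_le_ofReal this
    have hmem : ∀ m : (g⁻¹' {k} : Set T), (m.1.1 : ℕ) ∈ {m : ℕ | ν m ≤ r} := by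
      rintro ⟨m, hm⟩
      have hmk : (⌊σ * (ν m.1 - γ)⌋₊ : ℕ) = k := hm
      have hlt : σ * (ν m.1 - γ) < (k:ℝ) + 1 := by
        rw [← hmk]; push_cast; exact Nat.lt_floor_add_one _
      have h2 : ν m.1 - γ < ((k:ℝ)+1)/σ := (lt_div_iff₀ hσ).mpr (by nlinarith)
      have : ν m.1 ≤ γ + ((k:ℝ)+1)/σ := by linarith
      exact this
    set ι : (g⁻¹' {k} : Set T) → {m : ℕ | ν m ≤ r} := fun m => ⟨m.1.1, hmem m⟩ with hι
    have hinj : Function.Injective ι := by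
      rintro ⟨⟨a, ha⟩, ha2⟩ ⟨⟨b, hb1⟩, hb2⟩ hab
      simp only [hι, Subtype.mk.injEq] at hab ⊢
      exact Subtype.ext hab
    have hfs := hfin r hrpos
    haveI := hfs.fintype
    calc ∑' m : (g⁻¹' {k} : Set T), f m ≤ ∑' _ : (g⁻¹' {k} : Set T), c :=
          ENNReal.tsum_le_tsum hterm
      _ = ∑' m : (g⁻¹' {k} : Set T), (fun _ : {m : ℕ | ν m ≤ r} => c) (ι m) := rfl
      _ ≤ ∑' _ : {m : ℕ | ν m ≤ r}, c := ENNReal.tsum_comp_le_tsum_of_injective hinj _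
      _ = ({m : ℕ | ν m ≤ r}.ncard : ℝ≥0∞) * c := by
          rw [tsum_fintype]
          rw [Finset.sum_const, Finset.card_univ, nsmul_eq_mul, Set.ncard_eq_toFinset_card',
            Set.toFinset_card]
      _ ≤ ENNReal.ofReal (Ctil * r ^ q) * c := by
          gcongr
          rw [← ENNReal.ofReal_natCast]
          exact ENNReal.ofReal_le_ofReal (hcnt r hrpos)
  -- the comparison series
  set c1 : ℝ := Ctil * 2^q * (σ*γ)^q / σ^q * Real.exp (-(σ*γ)) with hc1
  set c2 : ℝ := Ctil * 2^q / σ^q * Real.exp (-(σ*γ)) with hc2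
  have hc1nn : 0 ≤ c1 := by positivity
  have hc2nn : 0 ≤ c2 := by positivity
  set b : ℕ → ℝ := fun k => c1 * Real.exp (-(k:ℝ)) + c2 * (((k:ℝ)+1)^q * Real.exp (-(k:ℝ)))
    with hb
  have hbnn : ∀ k, 0 ≤ b k := fun k => by positivity
  have hbsum : Summable b :=
    (aux_summable_exp.mul_left c1).add ((aux_summable_rpow_exp q).mul_left c2)
  have hbd : ∀ k : ℕ,
      ENNReal.ofReal (Ctil * (γ + ((k:ℝ)+1)/σ) ^ q)
        * ENNReal.ofReal (Real.exp (-(σ*γ)) * Real.exp (-(k:ℝ))) ≤ ENNReal.ofReal (b k) := by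
    intro k
    rw [← ENNReal.ofReal_mul (by positivity)]
    apply ENNReal.ofReal_le_ofReal
    have hsplit : γ + ((k:ℝ)+1)/σ = (σ*γ + ((k:ℝ)+1))/σ := by field_simp
    have h1 : (γ + ((k:ℝ)+1)/σ)^q ≤ 2^q * ((σ*γ)^q + ((k:ℝ)+1)^q) / σ^q := by
      rw [hsplit, Real.div_rpow (by positivity) hσ.le]
      have := aux_rpow_add_le (σ*γ) ((k:ℝ)+1) q (by positivity) (by positivity) hq
      have hσq : (0:ℝ) < σ^q := Real.rpow_pos_of_pos hσ q
      rw [div_le_div_iff₀ hσq hσq]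
      nlinarith [Real.rpow_pos_of_pos hσ q]
    have hexp : (0:ℝ) < Real.exp (-(σ*γ)) * Real.exp (-(k:ℝ)) := by positivity
    calc Ctil * (γ + ((k:ℝ)+1)/σ)^q * (Real.exp (-(σ*γ)) * Real.exp (-(k:ℝ)))
        ≤ Ctil * (2^q * ((σ*γ)^q + ((k:ℝ)+1)^q) / σ^q)
            * (Real.exp (-(σ*γ)) * Real.exp (-(k:ℝ))) := by
          apply mul_le_mul_of_nonneg_right _ hexp.le
          exact mul_le_mul_of_nonneg_left h1 hC.le
      _ = b k := by rw [hb, hc1, hc2]; ring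
  -- combine in ℝ≥0∞
  have htot : ∑' m : T, f m ≤ ENNReal.ofReal (∑' k, b k) := by
    rw [hsig, ENNReal.ofReal_tsum_of_nonneg hbnn hbsum]
    exact ENNReal.tsum_le_tsum (fun k => le_trans (hfib k) (hbd k))
  -- bound the sum of b
  have hbval : ∑' k, b k ≤ (Ctil * 2^q * (D+E) + 1) * ((1 + (σ*γ)^q)/σ^q) * Real.exp (-(σ*γ)) := by
    have h1 : ∑' k, b k = c1 * E + c2 * D := by
      rw [hb, Summable.tsum_add (aux_summable_exp.mul_left c1) ((aux_summable_rpow_exp q).mul_left c2),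
        tsum_mul_left, tsum_mul_left]
    rw [h1, hc1, hc2]
    have hσq : (0:ℝ) < σ^q := Real.rpow_pos_of_pos hσ q
    have hx : (0:ℝ) ≤ (σ*γ)^q := Real.rpow_nonneg (by positivity) q
    have hexp : (0:ℝ) < Real.exp (-(σ*γ)) := Real.exp_pos _
    have inner : Ctil*2^q*((σ*γ)^q*E + D) ≤ (Ctil*2^q*(D+E)+1)*(1+(σ*γ)^q) := by
      nlinarith [mul_nonneg (mul_nonneg (mul_nonneg hC.le h2q.le) hD0) hx,
        mul_nonneg (mul_nonneg hC.le h2q.le) hE0]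
    have key : Ctil*2^q*(σ*γ)^q*Real.exp (-(σ*γ))*E + Ctil*2^q*Real.exp (-(σ*γ))*D ≤
        (Ctil*2^q*(D+E)+1)*(1+(σ*γ)^q)*Real.exp (-(σ*γ)) := by
      nlinarith [mul_le_mul_of_nonneg_right inner hexp.le]
    calc Ctil * 2^q * (σ*γ)^q / σ^q * Real.exp (-(σ*γ)) * E
          + Ctil * 2^q / σ^q * Real.exp (-(σ*γ)) * D
        = (Ctil*2^q*(σ*γ)^q*Real.exp (-(σ*γ))*E + Ctil*2^q*Real.exp (-(σ*γ))*D) / σ^q := by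
          ring
      _ ≤ ((Ctil*2^q*(D+E)+1)*(1+(σ*γ)^q)*Real.exp (-(σ*γ))) / σ^q := by
          gcongr
      _ = (Ctil * 2^q * (D+E) + 1) * ((1 + (σ*γ)^q)/σ^q) * Real.exp (-(σ*γ)) := by
          ring
  have hRHSnn : (0:ℝ) ≤ (Ctil * 2^q * (D+E) + 1) * ((1 + (σ*γ)^q)/σ^q) * Real.exp (-(σ*γ)) := by
    have hσq : (0:ℝ) < σ^q := Real.rpow_pos_of_pos hσ q
    have hx : (0:ℝ) ≤ (σ*γ)^q := Real.rpow_nonneg (by positivity) q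
    positivity
  have hfinal : ∑' m : T, f m ≤
      ENNReal.ofReal ((Ctil * 2^q * (D+E) + 1) * ((1 + (σ*γ)^q)/σ^q) * Real.exp (-(σ*γ))) :=
    htot.trans (ENNReal.ofReal_le_ofReal hbval)
  have hnetop : ∑' m : T, f m ≠ ⊤ :=
    ne_top_of_le_ne_top ENNReal.ofReal_ne_top hfinal
  -- back to ℝ
  have hsummable : Summable (fun m : T => Real.exp (-(σ * ν m.1))) := by
    have := ENNReal.summable_toReal hnetop
    refine this.congr (fun m => ?_)
    simp [hf, ENNReal.toReal_ofReal (Real.exp_nonneg _)]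
  refine ⟨hsummable, ?_⟩
  have heq : ∑' m : T, Real.exp (-(σ * ν m.1)) = (∑' m : T, f m).toReal := by
    rw [ENNReal.tsum_toReal_eq (fun m => ENNReal.ofReal_ne_top)]
    exact tsum_congr (fun m => by simp [hf, ENNReal.toReal_ofReal (Real.exp_nonneg _)])
  rw [heq]
  calc (∑' m : T, f m).toReal ≤
      (ENNReal.ofReal ((Ctil * 2^q * (D+E) + 1) * ((1 + (σ*γ)^q)/σ^q)
        * Real.exp (-(σ*γ)))).toReal :=
        ENNReal.toReal_mono ENNReal.ofReal_ne_top hfinal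
    _ = (Ctil * 2^q * (D+E) + 1) * ((1 + (σ*γ)^q)/σ^q) * Real.exp (-(σ*γ)) :=
        ENNReal.toReal_ofReal hRHSnn
end
end

section
/- Let Ω ⊂ ℝ^d be a bounded domain, T > 0, {μ_m}_{m≥1} ⊂ (0,∞), and let {ψ_m}_{m≥1} be an orthonormal basis of L²(Ω); set F_m(t,x) := e^{−μ_m t} ψ_m(x) on Q_T := (0,T)×Ω. For every ε ∈ (0,T) there exists a family {f_m^ε}_{m≥1} ⊂ L²(Q_T) biorthogonal to {F_m}_{m≥1}, i.e. ∫∫_{Q_T} F_n(t,x) f_m^ε(t,x) dx dt = δ_{nm} for all n,m ≥ 1, such that f_m^ε(t,·) ≡ 0 for t ∈ (0,ε] and ‖f_m^ε‖²_{L²(Q_T)} ≤ 2e · (1/(T−ε) + μ_m) · e^{2ε μ_m} for every m ≥ 1. -/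
open MeasureTheory Set Filter

noncomputable section

lemma aux_exp_int (a b c : ℝ) (hab : a ≤ b) (hc : 0 < c) :
    ∫ t in Set.Ioo a b, Real.exp (-(c*t))
      = (Real.exp (-(c*a)) - Real.exp (-(c*b)))/c := by
  rw [← MeasureTheory.integral_Ioc_eq_integral_Ioo, ← intervalIntegral.integral_of_le hab]
  have hderiv : ∀ t ∈ Set.uIcc a b,
      HasDerivAt (fun t => -(Real.exp (-(c*t))/c)) (Real.exp (-(c*t))) t := by
    intro t _
    have h1 : HasDerivAt (fun t : ℝ => -(c*t)) (-(c*1)) t :=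
      ((hasDerivAt_id t).const_mul c).neg
    have h2 := ((h1.exp).div_const c).neg
    refine h2.congr_deriv ?_
    rw [mul_one, mul_neg, neg_div, neg_neg, mul_div_assoc, div_self hc.ne', mul_one]
  have hint : IntervalIntegrable (fun t => Real.exp (-(c*t))) volume a b :=
    (Real.continuous_exp.comp ((continuous_const.mul continuous_id).neg)).intervalIntegrable a b
  rw [intervalIntegral.integral_eq_sub_of_hasDerivAt hderiv hint]
  ring

lemma aux_indicator_int (ε T C c : ℝ) (h0 : 0 < ε) (hεT : ε < T) (hc : 0 < c) :
    ∫ t in Set.Ioo (0:ℝ) T, (Set.Ioo ε T).indicator (fun t => C * Real.exp (-(c*t))) t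
      = C * ((Real.exp (-(c*ε)) - Real.exp (-(c*T)))/c) := by
  rw [setIntegral_indicator measurableSet_Ioo]
  have h : Set.Ioo (0:ℝ) T ∩ Set.Ioo ε T = Set.Ioo ε T := by
    rw [Set.inter_eq_right]
    exact Set.Ioo_subset_Ioo h0.le le_rfl
  rw [h, MeasureTheory.integral_const_mul, aux_exp_int ε T c hεT.le hc]

lemma aux_key (s : ℝ) (hs : 0 < s) : s / (1+s) ≤ 1 - Real.exp (-s) := by
  have h1 : (1:ℝ)+s ≤ Real.exp s := by linarith [Real.add_one_le_exp s]
  have hp : (0:ℝ) < 1+s := by linarith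
  have h2 : Real.exp (-s) ≤ 1/(1+s) := by
    rw [Real.exp_neg, one_div]
    exact inv_anti₀ hp h1
  have h3 : 1 - 1/(1+s) = s/(1+s) := by field_simp; ring
  linarith

set_option maxHeartbeats 1000000 in
/-- Proposition `Prop_epsLR` of the paper: a biorthogonal family to
`F_m(t,x) = e^{-μ_m t} ψ_m(x)` in `L²(Q_T)` supported in `[ε,T] × Ω`. -/
theorem statement14 (d : ℕ) (hd : 1 ≤ d)
    (Ω : Set (EuclideanSpace ℝ (Fin d)))
    (hΩ_open : IsOpen Ω) (hΩ_conn : IsConnected Ω) (hΩ_bdd : Bornology.IsBounded Ω)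
    (T : ℝ) (hT : 0 < T)
    (μ : ℕ → ℝ) (hμ : ∀ m, 0 < μ m)
    (ψ : ℕ → EuclideanSpace ℝ (Fin d) → ℝ)
    (hψ_mem : ∀ m, MemLp (ψ m) 2 (volume.restrict Ω))
    (hψ_orth : ∀ m n, (∫ x in Ω, ψ m x * ψ n x) = if m = n then (1:ℝ) else 0)
    (hψ_complete : ∀ f : EuclideanSpace ℝ (Fin d) → ℝ, MemLp f 2 (volume.restrict Ω) →
      (∀ m, (∫ x in Ω, f x * ψ m x) = 0) → f =ᵐ[volume.restrict Ω] 0)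
    (ε : ℝ) (hε : ε ∈ Set.Ioo (0:ℝ) T) :
    ∃ f : ℕ → ℝ → EuclideanSpace ℝ (Fin d) → ℝ,
      (∀ m, MemLp (fun z : ℝ × EuclideanSpace ℝ (Fin d) => f m z.1 z.2) 2
        (((volume : Measure ℝ).restrict (Set.Ioo 0 T)).prod
          ((volume : Measure (EuclideanSpace ℝ (Fin d))).restrict Ω))) ∧
      (∀ n m, (∫ t in Set.Ioo (0:ℝ) T, ∫ x in Ω,
          (Real.exp (-(μ n * t)) * ψ n x) * f m t x) = if n = m then (1:ℝ) else 0) ∧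
      (∀ m, ∀ t ∈ Set.Ioc (0:ℝ) ε, ∀ x, f m t x = 0) ∧
      (∀ m, (∫ t in Set.Ioo (0:ℝ) T, ∫ x in Ω, (f m t x) ^ 2)
        ≤ 2 * Real.exp 1 * (1 / (T - ε) + μ m) * Real.exp (2 * ε * μ m)) := by
  obtain ⟨hε0, hεT⟩ := hε
  set D : ℕ → ℝ := fun m => Real.exp (-(2*μ m*ε)) - Real.exp (-(2*μ m*T)) with hD_def
  have hD_pos : ∀ m, 0 < D m := by
    intro m
    have : -(2*μ m*T) < -(2*μ m*ε) := by nlinarith [hμ m]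
    simpa [hD_def, sub_pos] using Real.exp_lt_exp.mpr this
  set c : ℕ → ℝ := fun m => (2*μ m) / D m with hc_def
  have hc_pos : ∀ m, 0 < c m := fun m => div_pos (by linarith [hμ m]) (hD_pos m)
  have hcD : ∀ m, c m * D m = 2*μ m := fun m => div_mul_cancel₀ _ (hD_pos m).ne'
  set G : ℕ → ℝ → ℝ :=
    fun m => (Set.Ioo ε T).indicator (fun t => c m * Real.exp (-(μ m * t))) with hG_def
  have hG_mem : ∀ m, ∀ t ∈ Set.Ioo ε T, G m t = c m * Real.exp (-(μ m * t)) :=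
    fun m t ht => Set.indicator_of_mem ht _
  have hG_nmem : ∀ m, ∀ t, t ∉ Set.Ioo ε T → G m t = 0 :=
    fun m t ht => Set.indicator_of_notMem ht _
  refine ⟨fun m t x => G m t * ψ m x, ?_, ?_, ?_, ?_⟩
  · -- MemLp
    intro m
    set P := (((volume : Measure ℝ).restrict (Set.Ioo 0 T)).prod
      ((volume : Measure (EuclideanSpace ℝ (Fin d))).restrict Ω)) with hP
    have hμ1 : (volume : Measure ℝ).restrict (Set.Ioo 0 T) Set.univ ≠ ⊤ := by
      rw [Measure.restrict_apply MeasurableSet.univ, Set.univ_inter, Real.volume_Ioo]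
      exact ENNReal.ofReal_ne_top
    have hsnd : MemLp (fun z : ℝ × EuclideanSpace ℝ (Fin d) => ψ m z.2) 2 P := by
      have : MemLp (ψ m) 2 (P.map Prod.snd) := by
        rw [hP, Measure.map_snd_prod]
        exact (hψ_mem m).smul_measure hμ1
      exact this.comp_of_map measurable_snd.aemeasurable
    have hcont : Continuous fun t : ℝ => c m * Real.exp (-(μ m * t)) :=
      continuous_const.mul (Real.continuous_exp.comp ((continuous_const.mul continuous_id).neg))
    have hGmeas : Measurable (G m) := hcont.measurable.indicator measurableSet_Ioo
    have hGbdd : ∀ t, |G m t| ≤ c m := by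
      intro t
      by_cases ht : t ∈ Set.Ioo ε T
      · rw [hG_mem m t ht]
        have h1 : 0 < t := lt_trans hε0 ht.1
        have h2 : Real.exp (-(μ m * t)) ≤ 1 := by
          rw [Real.exp_le_one_iff]
          nlinarith [hμ m]
        rw [abs_of_nonneg (mul_nonneg (hc_pos m).le (Real.exp_pos _).le)]
        nlinarith [hc_pos m, Real.exp_pos (-(μ m * t))]
      · rw [hG_nmem m t ht]
        simpa using (hc_pos m).le
    refine MemLp.of_le_mul (c := c m) hsnd ?_ (Eventually.of_forall fun z => ?_)
    · exact ((hGmeas.comp measurable_fst).aestronglyMeasurable).mul hsnd.1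
    · show ‖G m z.1 * ψ m z.2‖ ≤ c m * ‖ψ m z.2‖
      rw [norm_mul]
      exact mul_le_mul_of_nonneg_right
        (by simpa [Real.norm_eq_abs] using hGbdd z.1) (norm_nonneg _)
  · -- biorthogonality
    intro n m
    have inner : ∀ t, (∫ x in Ω, (Real.exp (-(μ n * t)) * ψ n x) * (G m t * ψ m x))
        = (Real.exp (-(μ n * t)) * G m t) * (if n = m then (1:ℝ) else 0) := by
      intro t
      have h : ∀ x, (Real.exp (-(μ n * t)) * ψ n x) * (G m t * ψ m x)
          = (Real.exp (-(μ n * t)) * G m t) * (ψ n x * ψ m x) := fun x => by ring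
      simp_rw [h]
      rw [MeasureTheory.integral_const_mul, hψ_orth n m]
    simp_rw [inner]
    by_cases h : n = m
    · subst h
      simp only [eq_self_iff_true, if_true, mul_one]
      have heq : ∀ t, Real.exp (-(μ n * t)) * G n t
          = (Set.Ioo ε T).indicator (fun t => c n * Real.exp (-((2*μ n)*t))) t := by
        intro t
        by_cases ht : t ∈ Set.Ioo ε T
        · rw [hG_mem n t ht, Set.indicator_of_mem ht,
            show -((2*μ n)*t) = -(μ n*t) + -(μ n*t) by ring, Real.exp_add]
          ring
        · rw [hG_nmem n t ht, Set.indicator_of_notMem ht, mul_zero]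
      simp_rw [heq]
      rw [aux_indicator_int ε T (c n) (2*μ n) hε0 hεT (by linarith [hμ n])]
      have hDm : Real.exp (-(2*μ n*ε)) - Real.exp (-(2*μ n*T)) = D n := rfl
      rw [hDm]
      have hμn : (2*μ n) ≠ 0 := by have := hμ n; linarith
      calc c n * (D n / (2*μ n)) = (c n * D n) / (2*μ n) := by ring
        _ = 1 := by rw [hcD n]; exact div_self hμn
    · simp [h]
  · -- support
    intro m t ht x
    have hnm : t ∉ Set.Ioo ε T := fun h => absurd ht.2 (not_le.mpr h.1)
    show G m t * ψ m x = 0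
    rw [hG_nmem m t hnm, zero_mul]
  · -- norm bound
    intro m
    have inner : ∀ t, (∫ x in Ω, (G m t * ψ m x)^2) = G m t ^ 2 := by
      intro t
      have h : ∀ x, (G m t * ψ m x)^2 = G m t ^ 2 * (ψ m x * ψ m x) := fun x => by ring
      simp_rw [h]
      rw [MeasureTheory.integral_const_mul, hψ_orth m m]
      simp
    simp_rw [inner]
    have heq : ∀ t, G m t ^ 2
        = (Set.Ioo ε T).indicator (fun t => (c m)^2 * Real.exp (-((2*μ m)*t))) t := by
      intro t
      by_cases ht : t ∈ Set.Ioo ε T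
      · rw [hG_mem m t ht, Set.indicator_of_mem ht,
          show -((2*μ m)*t) = -(μ m*t) + -(μ m*t) by ring, Real.exp_add]
        ring
      · rw [hG_nmem m t ht, Set.indicator_of_notMem ht]
        ring
    simp_rw [heq]
    rw [aux_indicator_int ε T ((c m)^2) (2*μ m) hε0 hεT (by linarith [hμ m])]
    have hDm : Real.exp (-(2*μ m*ε)) - Real.exp (-(2*μ m*T)) = D m := rfl
    rw [hDm]
    have hμm : (2*μ m) ≠ 0 := by have := hμ m; linarith
    have hval : (c m)^2 * (D m/(2*μ m)) = c m := by
      calc (c m)^2 * (D m/(2*μ m)) = c m * ((c m * D m) / (2*μ m)) := by ring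
        _ = c m := by rw [hcD m, div_self hμm, mul_one]
    rw [hval]
    -- now show c m ≤ RHS
    obtain ⟨s, hs_def⟩ : ∃ s : ℝ, s = 2*μ m*(T-ε) := ⟨_, rfl⟩
    have hTε : (0:ℝ) < T - ε := by linarith
    have hs : 0 < s := by rw [hs_def]; nlinarith [hμ m]
    have hkey := aux_key s hs
    have hDeq : D m = Real.exp (-(2*μ m*ε)) * (1 - Real.exp (-s)) := by
      rw [← hDm, mul_sub, mul_one, ← Real.exp_add, hs_def]
      ring_nf
    have hE : Real.exp (2*ε*μ m) * Real.exp (-(2*μ m*ε)) = 1 := by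
      rw [← Real.exp_add, show 2*ε*μ m + -(2*μ m*ε) = 0 by ring, Real.exp_zero]
    have he2 : (2:ℝ) ≤ Real.exp 1 := by linarith [Real.add_one_le_exp 1]
    have h1s : (0:ℝ) < 1 + s := by linarith
    have h' : 2*μ m*(1+s) ≤ (2*Real.exp 1*(1/(T-ε)+μ m))*s := by
      rw [hs_def]
      have hrw : (1/(T-ε)+μ m)*(2*μ m*(T-ε)) = 2*μ m + μ m*(2*μ m*(T-ε)) := by
        field_simp
      nlinarith [hμ m, mul_nonneg (sub_nonneg.mpr he2) (hμ m).le,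
        mul_nonneg (mul_nonneg (sub_nonneg.mpr he2) (mul_pos (hμ m) (hμ m)).le) hTε.le]
    have hstep : 2*μ m ≤ (2*Real.exp 1*(1/(T-ε)+μ m)) * (s/(1+s)) := by
      calc 2*μ m = (2*μ m*(1+s))/(1+s) := by field_simp
        _ ≤ ((2*Real.exp 1*(1/(T-ε)+μ m))*s)/(1+s) := by
            exact (div_le_div_iff_of_pos_right h1s).mpr h'
        _ = (2*Real.exp 1*(1/(T-ε)+μ m))*(s/(1+s)) := by ring
    have hKpos : 0 ≤ 2*Real.exp 1*(1/(T-ε)+μ m) := by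
      nlinarith [Real.exp_pos 1, hμ m, one_div_pos.mpr hTε]
    have hstep2 : (2*Real.exp 1*(1/(T-ε)+μ m)) * (s/(1+s))
        ≤ (2*Real.exp 1*(1/(T-ε)+μ m)) * (1 - Real.exp (-s)) :=
      mul_le_mul_of_nonneg_left hkey hKpos
    have hfin : (2*Real.exp 1*(1/(T-ε)+μ m)) * (1 - Real.exp (-s))
        = 2 * Real.exp 1 * (1 / (T - ε) + μ m) * Real.exp (2 * ε * μ m) * D m := by
      rw [hDeq, show 2*Real.exp 1*(1/(T-ε)+μ m)*Real.exp (2*ε*μ m)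
          * (Real.exp (-(2*μ m*ε)) * (1 - Real.exp (-s)))
        = 2*Real.exp 1*(1/(T-ε)+μ m)
          * ((Real.exp (2*ε*μ m) * Real.exp (-(2*μ m*ε))) * (1 - Real.exp (-s))) from by ring,
        hE]
      ring
    have hfinal : 2*μ m ≤ 2 * Real.exp 1 * (1 / (T - ε) + μ m)
        * Real.exp (2 * ε * μ m) * D m := by
      rw [← hfin]; exact hstep.trans hstep2
    calc c m = (2*μ m)/D m := rfl
      _ ≤ _ := by rw [div_le_iff₀ (hD_pos m)]; exact hfinal
end
end

section
/- Under the Lebeau–Robbiano hypotheses (counting estimate with exponent θ₁ = d/2 and spectral inequality with constant β), there exists a constant Ĉ > 0, depending only on θ₁, such that for every T > 0, every α > 2β, every N ≥ 1 and every P_N, ∫∫_{Q_T} e^{−αβ/t} |P_N(t,x)|² dx dt ≤ 3 ‖P_N‖²_{L²((0,T)×ω)} + M(α,T) · ∫∫_{Q_T} e^{−αβ/t} |P_N(t,x)|² dx dt, where M(α,T) := Ĉ · χ(T,α) · (α² − 2αβ)^{−(2θ₁+1)} · e^{−(α² − 2αβ)/(2T)} and χ(T,α) := (1/T + 1) ·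 [T^{θ₁+1}(1 + T^{θ₁+1}) + α^{2θ₁+2}]. -/
open MeasureTheory Set Filter

noncomputable section


private lemma memLp_mul_integrable {α : Type*} {m : MeasurableSpace α} {ν : Measure α}
    {f g : α → ℝ} (hf : MemLp f 2 ν) (hg : MemLp g 2 ν) :
    Integrable (fun x => f x * g x) ν := by
  have h1 := (hf.add hg).integrable_sq
  have h2 := hf.integrable_sq
  have h3 := hg.integrable_sq
  have heq : (fun x => f x * g x) = fun x => (((f x + g x) ^ 2 - f x ^ 2) - g x ^ 2) / 2 := by
    funext x; ring
  rw [heq]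
  exact ((h1.sub h2).sub h3).div_const 2

private lemma sq_expand {α : Type*} {m : MeasurableSpace α} {ν : Measure α}
    (ψ : ℕ → α → ℝ) (hmem : ∀ k, MemLp (ψ k) 2 ν) (S : Finset ℕ) (c : ℕ → ℝ) :
    (∫ x, (∑ k ∈ S, c k * ψ k x) ^ 2 ∂ν)
      = ∑ k ∈ S, ∑ l ∈ S, (c k * c l) * ∫ x, ψ k x * ψ l x ∂ν := by
  have hint : ∀ k l : ℕ, Integrable (fun x => (c k * c l) * (ψ k x * ψ l x)) ν :=
    fun k l => (memLp_mul_integrable (hmem k) (hmem l)).const_mul _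
  have hexp : ∀ x, (∑ k ∈ S, c k * ψ k x) ^ 2
      = ∑ k ∈ S, ∑ l ∈ S, (c k * c l) * (ψ k x * ψ l x) := by
    intro x
    rw [sq, Finset.sum_mul_sum]
    exact Finset.sum_congr rfl fun k _ => Finset.sum_congr rfl fun l _ => by ring
  calc (∫ x, (∑ k ∈ S, c k * ψ k x) ^ 2 ∂ν)
      = ∫ x, ∑ k ∈ S, ∑ l ∈ S, (c k * c l) * (ψ k x * ψ l x) ∂ν := by simp_rw [hexp]
    _ = ∑ k ∈ S, ∑ l ∈ S, (c k * c l) * ∫ x, ψ k x * ψ l x ∂ν := by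
        rw [integral_finset_sum S (fun k _ => integrable_finset_sum S (fun l _ => hint k l))]
        exact Finset.sum_congr rfl fun k _ => by
          rw [integral_finset_sum S (fun l _ => hint k l)]
          exact Finset.sum_congr rfl fun l _ => integral_const_mul _ _

private lemma ortho_expand {α : Type*} {m : MeasurableSpace α} {ν : Measure α}
    (ψ : ℕ → α → ℝ) (hmem : ∀ k, MemLp (ψ k) 2 ν)
    (horth : ∀ k l, (∫ x, ψ k x * ψ l x ∂ν) = if k = l then (1:ℝ) else 0)
    (S : Finset ℕ) (c : ℕ → ℝ) :
    (∫ x, (∑ k ∈ S, c k * ψ k x) ^ 2 ∂ν) = ∑ k ∈ S, (c k) ^ 2 := by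
  rw [sq_expand ψ hmem S c]
  refine Finset.sum_congr rfl fun k hk => ?_
  rw [Finset.sum_eq_single k]
  · rw [horth k k, if_pos rfl]; ring
  · intro l _ hl; rw [horth k l, if_neg (Ne.symm hl)]; ring
  · intro h; exact absurd hk h

private lemma integrableOn_exp_exp {T : ℝ} {p q : ℝ → ℝ} (hp : Measurable p) (hq : Measurable q)
    (hp0 : ∀ t ∈ Set.Ioo (0:ℝ) T, p t ≤ 0) (hq0 : ∀ t ∈ Set.Ioo (0:ℝ) T, q t ≤ 0) :
    IntegrableOn (fun t => Real.exp (p t) * Real.exp (q t)) (Set.Ioo 0 T) := by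
  refine Integrable.mono' (g := fun _ => (1:ℝ)) ?_ ?_ ?_
  · refine integrableOn_const (ne_of_lt ?_) (by simp)
    rw [Real.volume_Ioo]; exact ENNReal.ofReal_lt_top
  · exact ((Real.measurable_exp.comp hp).mul (Real.measurable_exp.comp hq)).aestronglyMeasurable
  · rw [ae_restrict_iff' measurableSet_Ioo]
    refine Filter.Eventually.of_forall fun t ht => ?_
    have h1 : Real.exp (p t) ≤ 1 := Real.exp_le_one_iff.2 (hp0 t ht)
    have h2 : Real.exp (q t) ≤ 1 := Real.exp_le_one_iff.2 (hq0 t ht)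
    rw [Real.norm_eq_abs, abs_mul, abs_of_pos (Real.exp_pos _), abs_of_pos (Real.exp_pos _)]
    show Real.exp (p t) * Real.exp (q t) ≤ 1
    calc Real.exp (p t) * Real.exp (q t) ≤ 1 * 1 :=
          mul_le_mul h1 h2 (Real.exp_pos _).le zero_le_one
      _ = 1 := one_mul 1


private lemma Kle {T s A B : ℝ} (hT : 0 < T) (hs : 0 < s) (hA : 0 < A) (hB : 0 ≤ B) :
    (∫ t in Set.Ioo (0:ℝ) T, Real.exp (-(s + 2*A)/t) * Real.exp (-(B*t)))
      ≤ 2 * Real.exp (-s/T)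
          * ∫ t in Set.Ioo (0:ℝ) T, Real.exp (-A/t) * Real.exp (-((2*B)*t)) := by
  have hT2 : (0:ℝ) ≤ T/2 := by linarith
  have hgint : IntegrableOn (fun t => Real.exp (-A/t) * Real.exp (-((2*B)*t)))
      (Set.Ioo 0 T) := by
    refine integrableOn_exp_exp (measurable_const.div measurable_id)
      ((measurable_id.const_mul (2*B)).neg) (fun t ht => ?_) (fun t ht => ?_)
    · rw [neg_div]; exact neg_nonpos.2 (div_nonneg hA.le ht.1.le)
    · exact neg_nonpos.2 (mul_nonneg (by linarith) ht.1.le)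
  have hfsub : IntegrableOn
      (fun u => Real.exp (-(s + 2*A)/(2*u)) * Real.exp (-(B*(2*u)))) (Set.Ioo 0 (T/2)) := by
    refine integrableOn_exp_exp (measurable_const.div (measurable_id.const_mul 2))
      (((measurable_id.const_mul 2).const_mul B).neg) (fun u hu => ?_) (fun u hu => ?_)
    · rw [neg_div]; exact neg_nonpos.2 (div_nonneg (by linarith) (by linarith [hu.1]))
    · exact neg_nonpos.2 (mul_nonneg hB (by linarith [hu.1]))
  have step2 : (∫ t in Set.Ioo (0:ℝ) T, Real.exp (-(s + 2*A)/t) * Real.exp (-(B*t)))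
      = 2 * ∫ u in Set.Ioo (0:ℝ) (T/2),
          Real.exp (-(s + 2*A)/(2*u)) * Real.exp (-(B*(2*u))) := by
    have h2 := intervalIntegral.integral_comp_mul_left
      (a := (0:ℝ)) (b := T/2)
      (fun t => Real.exp (-(s + 2*A)/t) * Real.exp (-(B*t))) (two_ne_zero (α := ℝ))
    rw [mul_zero, show (2:ℝ) * (T/2) = T by ring, smul_eq_mul] at h2
    rw [← MeasureTheory.integral_Ioc_eq_integral_Ioo,
      ← intervalIntegral.integral_of_le hT.le,
      ← MeasureTheory.integral_Ioc_eq_integral_Ioo (f := fun u =>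
        Real.exp (-(s + 2*A)/(2*u)) * Real.exp (-(B*(2*u)))),
      ← intervalIntegral.integral_of_le hT2]
    rw [h2]; ring
  have step4 : (∫ u in Set.Ioo (0:ℝ) (T/2),
        Real.exp (-(s + 2*A)/(2*u)) * Real.exp (-(B*(2*u))))
      ≤ ∫ u in Set.Ioo (0:ℝ) (T/2),
          Real.exp (-s/T) * (Real.exp (-A/u) * Real.exp (-((2*B)*u))) := by
    refine setIntegral_mono_on hfsub
      ((hgint.mono_set (Set.Ioo_subset_Ioo_right (by linarith))).const_mul _)
      measurableSet_Ioo (fun u hu => ?_)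
    have hu0 : 0 < u := hu.1
    have huT : 2*u ≤ T := by linarith [hu.2]
    have key : -(s + 2*A)/(2*u) = (-s/(2*u)) + (-A/u) := by
      field_simp; ring
    have keyB : -(B*(2*u)) = -((2*B)*u) := by ring
    rw [key, keyB, Real.exp_add]
    have h1 : Real.exp (-s/(2*u)) ≤ Real.exp (-s/T) := by
      apply Real.exp_le_exp.2
      rw [neg_div, neg_div, neg_le_neg_iff]
      exact div_le_div_of_nonneg_left hs.le (by linarith) huT
    calc Real.exp (-s/(2*u)) * Real.exp (-A/u) * Real.exp (-((2*B)*u))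
        = Real.exp (-s/(2*u)) * (Real.exp (-A/u) * Real.exp (-((2*B)*u))) := by ring
      _ ≤ Real.exp (-s/T) * (Real.exp (-A/u) * Real.exp (-((2*B)*u))) := by
          apply mul_le_mul_of_nonneg_right h1 (by positivity)
  have step5 : (∫ u in Set.Ioo (0:ℝ) (T/2),
        Real.exp (-s/T) * (Real.exp (-A/u) * Real.exp (-((2*B)*u))))
      ≤ Real.exp (-s/T) * ∫ t in Set.Ioo (0:ℝ) T,
          Real.exp (-A/t) * Real.exp (-((2*B)*t)) := by
    rw [integral_const_mul]
    refine mul_le_mul_of_nonneg_left ?_ (Real.exp_pos _).le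
    refine setIntegral_mono_set hgint (Filter.Eventually.of_forall fun t => by positivity) ?_
    exact (Set.Ioo_subset_Ioo_right (by linarith)).eventuallyLE
  calc (∫ t in Set.Ioo (0:ℝ) T, Real.exp (-(s + 2*A)/t) * Real.exp (-(B*t)))
      = 2 * ∫ u in Set.Ioo (0:ℝ) (T/2),
          Real.exp (-(s + 2*A)/(2*u)) * Real.exp (-(B*(2*u))) := step2
    _ ≤ 2 * ∫ u in Set.Ioo (0:ℝ) (T/2),
          Real.exp (-s/T) * (Real.exp (-A/u) * Real.exp (-((2*B)*u))) := by linarith [step4]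
    _ ≤ 2 * (Real.exp (-s/T) * ∫ t in Set.Ioo (0:ℝ) T,
          Real.exp (-A/t) * Real.exp (-((2*B)*t))) := by linarith [step5]
    _ = 2 * Real.exp (-s/T)
          * ∫ t in Set.Ioo (0:ℝ) T, Real.exp (-A/t) * Real.exp (-((2*B)*t)) := by ring


private lemma M_bound (k T s χ : ℝ) (hk : 1 ≤ k) (hT : 0 < T) (hs : 0 < s)
    (hχ : T ^ k ≤ χ) :
    5 * Real.exp (-s/T) ≤ (5 * (2*k) ^ k) * χ / s ^ k * Real.exp (-s/(2*T)) := by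
  have hk0 : 0 < k := by linarith
  have hsk : 0 < s ^ k := Real.rpow_pos_of_pos hs k
  rw [div_mul_eq_mul_div, le_div_iff₀ hsk]
  have h1 : s/(2*T)/k ≤ Real.exp (s/(2*T)/k) := by
    linarith [Real.add_one_le_exp (s/(2*T)/k)]
  have h2 : (s/(2*T)/k) ^ k ≤ Real.exp (s/(2*T)/k) ^ k :=
    Real.rpow_le_rpow (by positivity) h1 hk0.le
  have h3 : Real.exp (s/(2*T)/k) ^ k = Real.exp (s/(2*T)) := by
    rw [← Real.exp_log (Real.exp_pos (s/(2*T)/k)), Real.log_exp,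
      ← Real.exp_mul, div_mul_cancel₀ _ hk0.ne']
  have h4 : s ^ k = (s/(2*T)/k) ^ k * ((2*T)*k) ^ k := by
    rw [← Real.mul_rpow (by positivity) (by positivity)]
    congr 1
    field_simp
  have h5 : (s/(2*T)/k) ^ k * ((2*T)*k) ^ k ≤ Real.exp (s/(2*T)) * ((2*T)*k) ^ k :=
    mul_le_mul_of_nonneg_right (h2.trans h3.le) (by positivity)
  have harg : -s/T + s/(2*T) = -s/(2*T) := by field_simp; ring
  have hsplitT : ((2*T)*k) ^ k = (2*k) ^ k * T ^ k := by
    rw [show ((2*T)*k : ℝ) = (2*k)*T by ring, Real.mul_rpow (by positivity) hT.le]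
  have h2k : (0:ℝ) < (2*k) ^ k := Real.rpow_pos_of_pos (by linarith) k
  calc 5 * Real.exp (-s/T) * s ^ k
      = 5 * (Real.exp (-s/T) * ((s/(2*T)/k) ^ k * ((2*T)*k) ^ k)) := by rw [h4]; ring
    _ ≤ 5 * (Real.exp (-s/T) * (Real.exp (s/(2*T)) * ((2*T)*k) ^ k)) := by
        have := mul_le_mul_of_nonneg_left h5 (Real.exp_pos (-s/T)).le
        linarith
    _ = 5 * ((2*T)*k) ^ k * (Real.exp (-s/T) * Real.exp (s/(2*T))) := by ring
    _ = 5 * ((2*T)*k) ^ k * Real.exp (-s/(2*T)) := by rw [← Real.exp_add, harg]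
    _ = 5 * ((2*k) ^ k * T ^ k) * Real.exp (-s/(2*T)) := by rw [hsplitT]
    _ ≤ 5 * (2*k) ^ k * χ * Real.exp (-s/(2*T)) := by
        have h6 : (2*k) ^ k * T ^ k ≤ (2*k) ^ k * χ :=
          mul_le_mul_of_nonneg_left hχ h2k.le
        have := mul_le_mul_of_nonneg_right h6 (Real.exp_pos (-s/(2*T))).le
        nlinarith [Real.exp_pos (-s/(2*T))]

/-- The Lebeau–Robbiano hypotheses: `Ω` is a bounded domain, `ω ⊆ Ω` is open and non-empty,
`{ψ_m}` is an orthonormal basis of `L²(Ω)`, the counting function of `{μ_m}` is bounded by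
`κ₁ r^{θ₁}`, and the spectral inequality holds with constant `β`. -/
structure LRHyp {E : Type} [NormedAddCommGroup E] [MeasureSpace E]
    (Ω ω : Set E) (μ : ℕ → ℝ) (ψ : ℕ → E → ℝ) (κ₁ θ₁ β : ℝ) : Prop where
  hΩ_open : IsOpen Ω
  hΩ_conn : IsConnected Ω
  hΩ_bdd : Bornology.IsBounded Ω
  hω_open : IsOpen ω
  hω_ne : ω.Nonempty
  hω_sub : ω ⊆ Ω
  hμ_pos : ∀ m, 0 < μ m
  hκ₁ : 0 < κ₁
  hβ : 0 < β
  hcount : ∀ r : ℝ, 0 < r → (({m : ℕ | μ m ≤ r}.ncard : ℝ)) ≤ κ₁ * r ^ θ₁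
  hfin : ∀ r : ℝ, {m : ℕ | Real.sqrt (μ m) ≤ r}.Finite
  hψ_mem : ∀ m, MemLp (ψ m) 2 (volume.restrict Ω)
  hψ_orth : ∀ m n, (∫ x in Ω, ψ m x * ψ n x) = if m = n then (1:ℝ) else 0
  hψ_complete : ∀ f : E → ℝ, MemLp f 2 (volume.restrict Ω) →
    (∀ m, (∫ x in Ω, f x * ψ m x) = 0) → f =ᵐ[volume.restrict Ω] 0
  hspec : ∀ Λ : ℝ, 0 < Λ → ∀ b : ℕ → ℝ,
    (∫ x in Ω, (∑ m ∈ (hfin Λ).toFinset, b m * ψ m x) ^ 2)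
      ≤ Real.exp (β * Λ) * ∫ x in ω, (∑ m ∈ (hfin Λ).toFinset, b m * ψ m x) ^ 2

/-- The finite combinations `P_N(t,x) = Σ_{√μ_m ≤ N} a_m e^{-μ_m t} ψ_m(x)`. -/
def PNLR {E : Type} (μ : ℕ → ℝ) (ψ : ℕ → E → ℝ)
    (hfin : ∀ r : ℝ, {m : ℕ | Real.sqrt (μ m) ≤ r}.Finite)
    (N : ℕ) (a : ℕ → ℝ) (t : ℝ) (x : E) : ℝ :=
  ∑ m ∈ (hfin (N : ℝ)).toFinset, a m * Real.exp (-(μ m * t)) * ψ m x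

private lemma core {E : Type} [NormedAddCommGroup E] [MeasureSpace E]
    (Ω ω : Set E) (hω_sub : ω ⊆ Ω) (μ : ℕ → ℝ) (ψ : ℕ → E → ℝ) (β : ℝ) (hβ0 : 0 < β)
    (hμpos : ∀ m, 0 < μ m)
    (hfin : ∀ r : ℝ, {m : ℕ | Real.sqrt (μ m) ≤ r}.Finite)
    (hmem : ∀ m, MemLp (ψ m) 2 (volume.restrict Ω))
    (horth : ∀ m n, (∫ x in Ω, ψ m x * ψ n x) = if m = n then (1:ℝ) else 0)
    (hspec : ∀ Λ : ℝ, 0 < Λ → ∀ b : ℕ → ℝ,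
      (∫ x in Ω, (∑ m ∈ (hfin Λ).toFinset, b m * ψ m x) ^ 2)
        ≤ Real.exp (β * Λ) * ∫ x in ω, (∑ m ∈ (hfin Λ).toFinset, b m * ψ m x) ^ 2)
    (T : ℝ) (hT : 0 < T) (α : ℝ) (hα : 2 * β < α) (N : ℕ) (a : ℕ → ℝ) :
    (∫ t in Set.Ioo (0:ℝ) T, ∫ x in Ω,
        Real.exp (-(α * β) / t) * (PNLR μ ψ hfin N a t x) ^ 2)
      ≤ 3 * (∫ t in Set.Ioo (0:ℝ) T, ∫ x in ω, (PNLR μ ψ hfin N a t x) ^ 2)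
        + 5 * Real.exp (-(α^2 - 2*α*β)/T)
          * ∫ t in Set.Ioo (0:ℝ) T, ∫ x in Ω,
              Real.exp (-(α * β) / t) * (PNLR μ ψ hfin N a t x) ^ 2 := by
  have hα0 : 0 < α := by nlinarith
  have hαβ : 0 < α * β := mul_pos hα0 hβ0
  have hs0 : 0 < α^2 - 2*α*β := by nlinarith
  simp only [PNLR]
  set S := (hfin (N:ℝ)).toFinset with hSdef
  set c : ℝ → ℕ → ℝ := fun t m => a m * Real.exp (-(μ m * t)) with hcdef
  have hcS : ∀ t, ∀ x, (∑ m ∈ S, a m * Real.exp (-(μ m * t)) * ψ m x)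
      = ∑ m ∈ S, c t m * ψ m x := fun t x => rfl
  have hmemω : ∀ k, MemLp (ψ k) 2 (volume.restrict ω) := fun k =>
    (hmem k).mono_measure (Measure.restrict_mono hω_sub le_rfl)
  -- expansion of the weighted Ω-integral
  have hesq : ∀ u : ℝ, Real.exp u ^ 2 = Real.exp (u + u) := fun u => by
    rw [sq, ← Real.exp_add]
  have hFt : ∀ t : ℝ, (∫ x in Ω,
        Real.exp (-(α*β)/t) * (∑ m ∈ S, a m * Real.exp (-(μ m * t)) * ψ m x) ^ 2)
      = ∑ m ∈ S, (a m)^2 * (Real.exp (-(α*β)/t) * Real.exp (-((2*μ m)*t))) := by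
    intro t
    rw [integral_const_mul, ortho_expand ψ hmem horth S (c t), Finset.mul_sum]
    refine Finset.sum_congr rfl fun m _ => ?_
    simp only [hcdef]
    rw [mul_pow, hesq, show -(μ m * t) + -(μ m * t) = -((2*μ m)*t) by ring]
    ring
  -- expansion of the ω-integral
  have hjt : ∀ t : ℝ, (∫ x in ω, (∑ m ∈ S, a m * Real.exp (-(μ m * t)) * ψ m x) ^ 2)
      = ∑ m ∈ S, ∑ n ∈ S, (a m * a n * (∫ x in ω, ψ m x * ψ n x))
          * (Real.exp (-(μ m * t)) * Real.exp (-(μ n * t))) := by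
    intro t
    rw [sq_expand ψ hmemω S (c t)]
    exact Finset.sum_congr rfl fun m _ => Finset.sum_congr rfl fun n _ => by
      simp only [hcdef]; ring
  -- pointwise-in-t inequality
  have key1 : ∀ t ∈ Set.Ioo (0:ℝ) T,
      (∑ m ∈ S, (a m)^2 * (Real.exp (-(α*β)/t) * Real.exp (-((2*μ m)*t))))
        ≤ 3 * (∑ m ∈ S, ∑ n ∈ S, (a m * a n * (∫ x in ω, ψ m x * ψ n x))
                * (Real.exp (-(μ m * t)) * Real.exp (-(μ n * t))))
          + (5/2) * ∑ m ∈ S, (a m)^2 * (Real.exp (-(α^2)/t) * Real.exp (-(μ m * t))) := by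
    intro t ht
    have ht0 : 0 < t := ht.1
    have hlam : 0 < α / t := div_pos hα0 ht0
    set L : Finset ℕ := S.filter (fun m => Real.sqrt (μ m) ≤ α / t) with hLdef
    set Lc : Finset ℕ := S.filter (fun m => ¬ Real.sqrt (μ m) ≤ α / t) with hLcdef
    have hLsub : L ⊆ (hfin (α/t)).toFinset := fun m hm => by
      rw [Set.Finite.mem_toFinset]; exact (Finset.mem_filter.1 hm).2
    set b : ℕ → ℝ := fun m => if m ∈ L then c t m else 0 with hbdef
    have hb : ∀ x, (∑ m ∈ (hfin (α/t)).toFinset, b m * ψ m x) = ∑ m ∈ L, c t m * ψ m x := by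
      intro x
      rw [← Finset.sum_subset hLsub (fun m _ hm => by
        simp only [hbdef, if_neg hm, zero_mul])]
      exact Finset.sum_congr rfl fun m hm => by simp only [hbdef, if_pos hm]
    -- spectral inequality for the low part
    have hspecP : (∫ x in Ω, (∑ m ∈ L, c t m * ψ m x) ^ 2)
        ≤ Real.exp (β * (α/t)) * ∫ x in ω, (∑ m ∈ L, c t m * ψ m x) ^ 2 := by
      have h := hspec (α/t) hlam b
      simpa only [hb] using h
    -- L² expansions over Ω
    have hlowΩ : (∫ x in Ω, (∑ m ∈ L, c t m * ψ m x) ^ 2) = ∑ m ∈ L, (c t m) ^ 2 :=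
      ortho_expand ψ hmem horth L (c t)
    have hhighΩ : (∫ x in Ω, (∑ m ∈ Lc, c t m * ψ m x) ^ 2) = ∑ m ∈ Lc, (c t m) ^ 2 :=
      ortho_expand ψ hmem horth Lc (c t)
    -- integrability of squares on ω
    have hmemsum : ∀ (F : Finset ℕ), MemLp (fun x => ∑ m ∈ F, c t m * ψ m x) 2
        (volume.restrict ω) := fun F =>
      memLp_finset_sum F (fun m _ => (hmemω m).const_mul _)
    have hintP : Integrable (fun x => (∑ m ∈ S, c t m * ψ m x) ^ 2) (volume.restrict ω) :=
      (hmemsum S).integrable_sq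
    have hintL : Integrable (fun x => (∑ m ∈ L, c t m * ψ m x) ^ 2) (volume.restrict ω) :=
      (hmemsum L).integrable_sq
    have hintH : Integrable (fun x => (∑ m ∈ Lc, c t m * ψ m x) ^ 2) (volume.restrict ω) :=
      (hmemsum Lc).integrable_sq
    have hintHΩ : Integrable (fun x => (∑ m ∈ Lc, c t m * ψ m x) ^ 2) (volume.restrict Ω) :=
      (memLp_finset_sum Lc (fun m _ => (hmem m).const_mul _)).integrable_sq
    -- pointwise split P = Plow + Phigh
    have hsplit : ∀ x, (∑ m ∈ S, c t m * ψ m x)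
        = (∑ m ∈ L, c t m * ψ m x) + ∑ m ∈ Lc, c t m * ψ m x := fun x =>
      (Finset.sum_filter_add_sum_filter_not S _ _).symm
    -- step (3): ∫_ω Plow² ≤ 3 ∫_ω P² + 3/2 ∫_ω Phigh²
    have step3 : (∫ x in ω, (∑ m ∈ L, c t m * ψ m x) ^ 2)
        ≤ 3 * (∫ x in ω, (∑ m ∈ S, c t m * ψ m x) ^ 2)
          + (3/2) * ∫ x in ω, (∑ m ∈ Lc, c t m * ψ m x) ^ 2 := by
      have hmono : (∫ x in ω, (∑ m ∈ L, c t m * ψ m x) ^ 2)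
          ≤ ∫ x in ω, (3 * (∑ m ∈ S, c t m * ψ m x) ^ 2
              + (3/2) * (∑ m ∈ Lc, c t m * ψ m x) ^ 2) := by
        refine integral_mono hintL ((hintP.const_mul 3).add (hintH.const_mul (3/2)))
          fun x => ?_
        rw [show (∑ m ∈ L, c t m * ψ m x)
            = (∑ m ∈ S, c t m * ψ m x) - (∑ m ∈ Lc, c t m * ψ m x) from by
          linarith [hsplit x]]
        nlinarith [sq_nonneg ((∑ m ∈ S, c t m * ψ m x) + (∑ m ∈ Lc, c t m * ψ m x) / 2)]
      rwa [integral_add (hintP.const_mul 3) (hintH.const_mul (3/2)),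
        integral_const_mul, integral_const_mul] at hmono
    -- step (4): ∫_ω Phigh² ≤ Σ_Lc c²
    have step4 : (∫ x in ω, (∑ m ∈ Lc, c t m * ψ m x) ^ 2) ≤ ∑ m ∈ Lc, (c t m) ^ 2 := by
      rw [← hhighΩ]
      exact setIntegral_mono_set hintHΩ
        (Filter.Eventually.of_forall fun x => sq_nonneg _) hω_sub.eventuallyLE
    -- step (5): high-frequency decay
    have step5 : (∑ m ∈ Lc, (c t m) ^ 2)
        ≤ ∑ m ∈ S, (a m)^2 * (Real.exp (-(α^2)/t) * Real.exp (-(μ m * t))) := by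
      refine le_trans (Finset.sum_le_sum (fun m hm => ?_))
        (Finset.sum_le_sum_of_subset_of_nonneg (Finset.filter_subset _ S)
          (fun m _ _ => by positivity))
      have hm' : α / t < Real.sqrt (μ m) := lt_of_not_ge (Finset.mem_filter.1 hm).2
      have h1 : (α/t)^2 < μ m := by
        have := Real.lt_sqrt hlam.le (y := μ m)
        exact this.1 hm'
      have h2 : α^2 < μ m * t^2 := by
        have h3 := mul_lt_mul_of_pos_right h1 (pow_pos ht0 2)
        rwa [div_pow, div_mul_cancel₀] at h3
        exact (pow_pos ht0 2).ne'
      have hexpcmp : Real.exp (-(μ m * t)) ≤ Real.exp (-(α^2)/t) := by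
        apply Real.exp_le_exp.2
        rw [neg_div, neg_le_neg_iff, div_le_iff₀ ht0]
        nlinarith
      simp only [hcdef]
      rw [mul_pow, hesq]
      calc (a m)^2 * Real.exp (-(μ m * t) + -(μ m * t))
          = (a m)^2 * (Real.exp (-(μ m * t)) * Real.exp (-(μ m * t))) := by
            rw [Real.exp_add]
        _ ≤ (a m)^2 * (Real.exp (-(α^2)/t) * Real.exp (-(μ m * t))) := by
            apply mul_le_mul_of_nonneg_left
              (mul_le_mul_of_nonneg_right hexpcmp (Real.exp_pos _).le) (sq_nonneg _)
    -- weight identities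
    have hw1 : Real.exp (-(α*β)/t) ≤ 1 := Real.exp_le_one_iff.2 (by
      rw [neg_div]; exact neg_nonpos.2 (div_nonneg hαβ.le ht0.le))
    have hwe : Real.exp (-(α*β)/t) * Real.exp (β * (α/t)) = 1 := by
      rw [← Real.exp_add, show -(α*β)/t + β * (α/t) = 0 by field_simp; ring, Real.exp_zero]
    -- LHS = w * Σ_S c²
    have hLHS : (∑ m ∈ S, (a m)^2 * (Real.exp (-(α*β)/t) * Real.exp (-((2*μ m)*t))))
        = Real.exp (-(α*β)/t) * ∑ m ∈ S, (c t m)^2 := by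
      rw [Finset.mul_sum]
      refine Finset.sum_congr rfl fun m _ => ?_
      simp only [hcdef]
      rw [mul_pow, hesq, show -(μ m * t) + -(μ m * t) = -((2*μ m)*t) by ring]
      ring
    have hsplitsum : (∑ m ∈ S, (c t m)^2) = (∑ m ∈ L, (c t m)^2) + ∑ m ∈ Lc, (c t m)^2 :=
      (Finset.sum_filter_add_sum_filter_not S _ _).symm
    -- low part bound: w * Σ_L c² ≤ ∫_ω Plow²
    have hlowbd : Real.exp (-(α*β)/t) * (∑ m ∈ L, (c t m)^2)
        ≤ ∫ x in ω, (∑ m ∈ L, c t m * ψ m x) ^ 2 := by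
      rw [← hlowΩ]
      calc Real.exp (-(α*β)/t) * ∫ x in Ω, (∑ m ∈ L, c t m * ψ m x) ^ 2
          ≤ Real.exp (-(α*β)/t) * (Real.exp (β * (α/t))
              * ∫ x in ω, (∑ m ∈ L, c t m * ψ m x) ^ 2) :=
            mul_le_mul_of_nonneg_left hspecP (Real.exp_pos _).le
        _ = (Real.exp (-(α*β)/t) * Real.exp (β * (α/t)))
              * ∫ x in ω, (∑ m ∈ L, c t m * ψ m x) ^ 2 := by ring
        _ = ∫ x in ω, (∑ m ∈ L, c t m * ψ m x) ^ 2 := by rw [hwe, one_mul]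
    have hhighbd : Real.exp (-(α*β)/t) * (∑ m ∈ Lc, (c t m)^2) ≤ ∑ m ∈ Lc, (c t m)^2 := by
      have h0 : 0 ≤ ∑ m ∈ Lc, (c t m)^2 := Finset.sum_nonneg fun m _ => sq_nonneg _
      nlinarith
    -- assemble
    rw [hLHS, hsplitsum, ← hjt t, mul_add]
    have hjeq : (∑ m ∈ S, ∑ n ∈ S, (a m * a n * (∫ x in ω, ψ m x * ψ n x))
        * (Real.exp (-(μ m * t)) * Real.exp (-(μ n * t))))
        = ∫ x in ω, (∑ m ∈ S, c t m * ψ m x) ^ 2 := (hjt t).symm ▸ rfl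
    calc Real.exp (-(α*β)/t) * (∑ m ∈ L, (c t m)^2)
          + Real.exp (-(α*β)/t) * (∑ m ∈ Lc, (c t m)^2)
        ≤ (∫ x in ω, (∑ m ∈ L, c t m * ψ m x) ^ 2) + ∑ m ∈ Lc, (c t m)^2 :=
          add_le_add hlowbd hhighbd
      _ ≤ (3 * (∫ x in ω, (∑ m ∈ S, c t m * ψ m x) ^ 2)
            + (3/2) * ∑ m ∈ Lc, (c t m)^2) + ∑ m ∈ Lc, (c t m)^2 := by
          have := step3.trans (by linarith [step4] :
            3 * (∫ x in ω, (∑ m ∈ S, c t m * ψ m x) ^ 2)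
              + (3/2) * (∫ x in ω, (∑ m ∈ Lc, c t m * ψ m x) ^ 2)
            ≤ 3 * (∫ x in ω, (∑ m ∈ S, c t m * ψ m x) ^ 2)
              + (3/2) * ∑ m ∈ Lc, (c t m)^2)
          linarith
      _ ≤ 3 * (∫ x in ω, (∑ m ∈ S, c t m * ψ m x) ^ 2)
            + (5/2) * ∑ m ∈ S, (a m)^2 * (Real.exp (-(α^2)/t) * Real.exp (-(μ m * t))) := by
          linarith [step5]
  -- integrability of the t-functions
  have hIm : ∀ m : ℕ, IntegrableOn
      (fun t => Real.exp (-(α*β)/t) * Real.exp (-((2*μ m)*t))) (Set.Ioo 0 T) := fun m =>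
    integrableOn_exp_exp (measurable_const.div measurable_id)
      ((measurable_id.const_mul (2*μ m)).neg)
      (fun t ht => by rw [neg_div]; exact neg_nonpos.2 (div_nonneg hαβ.le ht.1.le))
      (fun t ht => neg_nonpos.2 (mul_nonneg (by linarith [hμpos m]) ht.1.le))
  have hKm : ∀ m : ℕ, IntegrableOn
      (fun t => Real.exp (-(α^2)/t) * Real.exp (-(μ m*t))) (Set.Ioo 0 T) := fun m =>
    integrableOn_exp_exp (measurable_const.div measurable_id)
      ((measurable_id.const_mul (μ m)).neg)
      (fun t ht => by rw [neg_div]; exact neg_nonpos.2 (div_nonneg (sq_nonneg α) ht.1.le))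
      (fun t ht => neg_nonpos.2 (mul_nonneg (hμpos m).le ht.1.le))
  have hjm : ∀ m n : ℕ, IntegrableOn
      (fun t => Real.exp (-(μ m*t)) * Real.exp (-(μ n*t))) (Set.Ioo 0 T) := fun m n =>
    integrableOn_exp_exp ((measurable_id.const_mul (μ m)).neg)
      ((measurable_id.const_mul (μ n)).neg)
      (fun t ht => neg_nonpos.2 (mul_nonneg (hμpos m).le ht.1.le))
      (fun t ht => neg_nonpos.2 (mul_nonneg (hμpos n).le ht.1.le))
  have hFint : IntegrableOn (fun t => ∑ m ∈ S,
      (a m)^2 * (Real.exp (-(α*β)/t) * Real.exp (-((2*μ m)*t)))) (Set.Ioo 0 T) :=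
    integrable_finset_sum S fun m _ => (hIm m).const_mul _
  have hjint : IntegrableOn (fun t => ∑ m ∈ S, ∑ n ∈ S,
      (a m * a n * (∫ x in ω, ψ m x * ψ n x))
        * (Real.exp (-(μ m * t)) * Real.exp (-(μ n * t)))) (Set.Ioo 0 T) :=
    integrable_finset_sum S fun m _ => integrable_finset_sum S fun n _ =>
      (hjm m n).const_mul _
  have hKint : IntegrableOn (fun t => ∑ m ∈ S,
      (a m)^2 * (Real.exp (-(α^2)/t) * Real.exp (-(μ m*t)))) (Set.Ioo 0 T) :=
    integrable_finset_sum S fun m _ => (hKm m).const_mul _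
  -- rewrite the iterated integrals
  simp_rw [hFt, hjt]
  have hIeq : (∫ t in Set.Ioo (0:ℝ) T, ∑ m ∈ S,
        (a m)^2 * (Real.exp (-(α*β)/t) * Real.exp (-((2*μ m)*t))))
      = ∑ m ∈ S, (a m)^2
          * ∫ t in Set.Ioo (0:ℝ) T, Real.exp (-(α*β)/t) * Real.exp (-((2*μ m)*t)) := by
    rw [integral_finset_sum S fun m _ => (hIm m).const_mul _]
    exact Finset.sum_congr rfl fun m _ => integral_const_mul _ _
  have hKeq : (∫ t in Set.Ioo (0:ℝ) T, ∑ m ∈ S,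
        (a m)^2 * (Real.exp (-(α^2)/t) * Real.exp (-(μ m*t))))
      = ∑ m ∈ S, (a m)^2
          * ∫ t in Set.Ioo (0:ℝ) T, Real.exp (-(α^2)/t) * Real.exp (-(μ m*t)) := by
    rw [integral_finset_sum S fun m _ => (hKm m).const_mul _]
    exact Finset.sum_congr rfl fun m _ => integral_const_mul _ _
  have hKle : ∀ m : ℕ,
      (∫ t in Set.Ioo (0:ℝ) T, Real.exp (-(α^2)/t) * Real.exp (-(μ m*t)))
        ≤ 2 * Real.exp (-(α^2 - 2*α*β)/T)
            * ∫ t in Set.Ioo (0:ℝ) T, Real.exp (-(α*β)/t) * Real.exp (-((2*μ m)*t)) := by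
    intro m
    have h := Kle (T := T) (s := α^2 - 2*α*β) (A := α*β) (B := μ m) hT hs0 hαβ (hμpos m).le
    rwa [show (fun t : ℝ => Real.exp (-(α^2 - 2*α*β + 2*(α*β))/t) * Real.exp (-(μ m*t)))
        = fun t : ℝ => Real.exp (-(α^2)/t) * Real.exp (-(μ m*t)) from
      funext fun u => by rw [show -(α^2 - 2*α*β + 2*(α*β))/u = -(α^2)/u by ring]] at h
  have hKtot : (∑ m ∈ S, (a m)^2
        * ∫ t in Set.Ioo (0:ℝ) T, Real.exp (-(α^2)/t) * Real.exp (-(μ m*t)))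
      ≤ 2 * Real.exp (-(α^2 - 2*α*β)/T) * ∑ m ∈ S, (a m)^2
          * ∫ t in Set.Ioo (0:ℝ) T, Real.exp (-(α*β)/t) * Real.exp (-((2*μ m)*t)) := by
    rw [Finset.mul_sum]
    refine Finset.sum_le_sum fun m _ => ?_
    calc (a m)^2 * ∫ t in Set.Ioo (0:ℝ) T, Real.exp (-(α^2)/t) * Real.exp (-(μ m*t))
        ≤ (a m)^2 * (2 * Real.exp (-(α^2 - 2*α*β)/T)
            * ∫ t in Set.Ioo (0:ℝ) T, Real.exp (-(α*β)/t) * Real.exp (-((2*μ m)*t))) :=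
          mul_le_mul_of_nonneg_left (hKle m) (sq_nonneg _)
      _ = 2 * Real.exp (-(α^2 - 2*α*β)/T) * ((a m)^2
            * ∫ t in Set.Ioo (0:ℝ) T, Real.exp (-(α*β)/t) * Real.exp (-((2*μ m)*t))) := by
          ring
  calc (∫ t in Set.Ioo (0:ℝ) T, ∑ m ∈ S,
        (a m)^2 * (Real.exp (-(α*β)/t) * Real.exp (-((2*μ m)*t))))
      ≤ ∫ t in Set.Ioo (0:ℝ) T,
          (3 * (∑ m ∈ S, ∑ n ∈ S, (a m * a n * (∫ x in ω, ψ m x * ψ n x))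
              * (Real.exp (-(μ m * t)) * Real.exp (-(μ n * t))))
            + (5/2) * ∑ m ∈ S, (a m)^2 * (Real.exp (-(α^2)/t) * Real.exp (-(μ m * t)))) :=
        setIntegral_mono_on hFint
          ((hjint.const_mul 3).add (hKint.const_mul (5/2))) measurableSet_Ioo key1
    _ = 3 * (∫ t in Set.Ioo (0:ℝ) T, ∑ m ∈ S, ∑ n ∈ S,
            (a m * a n * (∫ x in ω, ψ m x * ψ n x))
              * (Real.exp (-(μ m * t)) * Real.exp (-(μ n * t))))
          + (5/2) * ∫ t in Set.Ioo (0:ℝ) T, ∑ m ∈ S,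
            (a m)^2 * (Real.exp (-(α^2)/t) * Real.exp (-(μ m * t))) := by
        rw [integral_add (hjint.const_mul 3) (hKint.const_mul (5/2)),
          integral_const_mul, integral_const_mul]
    _ ≤ 3 * (∫ t in Set.Ioo (0:ℝ) T, ∑ m ∈ S, ∑ n ∈ S,
            (a m * a n * (∫ x in ω, ψ m x * ψ n x))
              * (Real.exp (-(μ m * t)) * Real.exp (-(μ n * t))))
          + (5/2) * (2 * Real.exp (-(α^2 - 2*α*β)/T) * ∑ m ∈ S, (a m)^2
              * ∫ t in Set.Ioo (0:ℝ) T, Real.exp (-(α*β)/t) * Real.exp (-((2*μ m)*t))) := by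
        rw [hKeq]
        linarith [hKtot]
    _ = 3 * (∫ t in Set.Ioo (0:ℝ) T, ∑ m ∈ S, ∑ n ∈ S,
            (a m * a n * (∫ x in ω, ψ m x * ψ n x))
              * (Real.exp (-(μ m * t)) * Real.exp (-(μ n * t))))
          + 5 * Real.exp (-(α^2 - 2*α*β)/T)
            * ∫ t in Set.Ioo (0:ℝ) T, ∑ m ∈ S,
                (a m)^2 * (Real.exp (-(α*β)/t) * Real.exp (-((2*μ m)*t))) := by
        rw [hIeq]; ring


/-- Proposition `Prop_restrictouvertLR` of the paper. -/
theorem statement15 (d : ℕ) (hd : 1 ≤ d) :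
    ∃ Chat : ℝ, 0 < Chat ∧
      ∀ (κ₁ β : ℝ) (Ω ω : Set (EuclideanSpace ℝ (Fin d)))
        (μ : ℕ → ℝ) (ψ : ℕ → EuclideanSpace ℝ (Fin d) → ℝ)
        (hLR : LRHyp Ω ω μ ψ κ₁ ((d : ℝ) / 2) β),
        ∀ T : ℝ, 0 < T → ∀ α : ℝ, 2 * β < α → ∀ N : ℕ, 1 ≤ N → ∀ a : ℕ → ℝ,
          (∫ t in Set.Ioo (0:ℝ) T, ∫ x in Ω,
              Real.exp (-(α * β) / t) * (PNLR μ ψ hLR.hfin N a t x) ^ 2)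
            ≤ 3 * (∫ t in Set.Ioo (0:ℝ) T, ∫ x in ω, (PNLR μ ψ hLR.hfin N a t x) ^ 2)
              + (Chat * ((1 / T + 1)
                    * (T ^ ((d : ℝ) / 2 + 1) * (1 + T ^ ((d : ℝ) / 2 + 1))
                        + α ^ (2 * ((d : ℝ) / 2) + 2)))
                  / (α ^ 2 - 2 * α * β) ^ (2 * ((d : ℝ) / 2) + 1)
                  * Real.exp (-(α ^ 2 - 2 * α * β) / (2 * T)))
                * ∫ t in Set.Ioo (0:ℝ) T, ∫ x in Ω,
                    Real.exp (-(α * β) / t) * (PNLR μ ψ hLR.hfin N a t x) ^ 2 := by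
  refine ⟨5 * (2*((d:ℝ)+1)) ^ ((d:ℝ)+1), by positivity, ?_⟩
  intro κ₁ β Ω ω μ ψ hLR T hT α hα N hN a
  have hβ0 : 0 < β := hLR.hβ
  have hα0 : 0 < α := by nlinarith
  have hs0 : 0 < α^2 - 2*α*β := by nlinarith
  have hd1 : (1:ℝ) ≤ (d:ℝ)+1 := by
    have : (0:ℝ) ≤ (d:ℝ) := Nat.cast_nonneg d
    linarith
  rw [show (2*((d:ℝ)/2)+1 : ℝ) = (d:ℝ)+1 by ring]
  have hcore := core Ω ω hLR.hω_sub μ ψ β hLR.hβ hLR.hμ_pos hLR.hfin hLR.hψ_mem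
    hLR.hψ_orth hLR.hspec T hT α hα N a
  have hI0 : 0 ≤ ∫ t in Set.Ioo (0:ℝ) T, ∫ x in Ω,
      Real.exp (-(α * β) / t) * (PNLR μ ψ hLR.hfin N a t x) ^ 2 :=
    integral_nonneg fun t => integral_nonneg fun x => by positivity
  have hχ : T ^ ((d:ℝ)+1) ≤ (1 / T + 1)
      * (T ^ ((d : ℝ) / 2 + 1) * (1 + T ^ ((d : ℝ) / 2 + 1)) + α ^ (2 * ((d : ℝ) / 2) + 2)) := by
    have hTθ : 0 < T ^ ((d:ℝ)/2+1) := Real.rpow_pos_of_pos hT _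
    have hαe : 0 < α ^ (2*((d:ℝ)/2)+2) := Real.rpow_pos_of_pos hα0 _
    have h1 : T ^ ((d:ℝ)/2+1) * T ^ ((d:ℝ)/2+1)
        ≤ T ^ ((d:ℝ)/2+1) * (1 + T ^ ((d:ℝ)/2+1)) + α ^ (2*((d:ℝ)/2)+2) := by nlinarith
    have h2 : (1/T) * (T ^ ((d:ℝ)/2+1) * T ^ ((d:ℝ)/2+1))
        ≤ (1/T+1) * (T ^ ((d:ℝ)/2+1) * (1 + T ^ ((d:ℝ)/2+1)) + α ^ (2*((d:ℝ)/2)+2)) := by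
      apply mul_le_mul (by linarith) h1 (by positivity) (by positivity)
    have h3 : (1/T) * (T ^ ((d:ℝ)/2+1) * T ^ ((d:ℝ)/2+1)) = T ^ ((d:ℝ)+1) := by
      rw [← Real.rpow_add hT, one_div, ← Real.rpow_neg_one T, ← Real.rpow_add hT]
      congr 1; ring
    linarith
  have hM := M_bound ((d:ℝ)+1) T (α^2 - 2*α*β)
    ((1 / T + 1) * (T ^ ((d : ℝ) / 2 + 1) * (1 + T ^ ((d : ℝ) / 2 + 1))
      + α ^ (2 * ((d : ℝ) / 2) + 2))) hd1 hT hs0 hχ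
  have hMI := mul_le_mul_of_nonneg_right hM hI0
  linarith
end
end
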